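/- Fix an integer K ≥ 1 and for each integer x ≥ 1 set N₁ = 3, J = xK and N₂ = x²K. Then Q_N(𝐔_{K,3,x²K,xK}, G_{K,3,x²K}) ≥ 1 − x/(1 + x²K) − 2(3 + x²K)²/((1 + x²K)² x K), and consequently Q_N(𝐔_{K,3,x²K,xK}, G_{K,3,x²K}) → 1 as x → ∞. -/

import Mathlib

open scoped Classical

noncomputable section

namespace BadComm

variable {V : Type*} [Fintype V]

/-- The finset of edges of a simple graph `G`. -/
def edgeFin (G : SimpleGraph V) : Finset (Sym2 V) :=
  Finset.univ.filter (fun e => e ∈ G.edgeSet)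

/-- The number of edges `m` of `G`. -/
def numEdges (G : SimpleGraph V) : ℕ := (edgeFin G).card

/-- The degree of a node. -/
def deg (G : SimpleGraph V) (v : V) : ℕ := (Finset.univ.filter (fun w => G.Adj v w)).card

/-- A clustering is encoded as a labelling `c : V → ℕ`; cluster `k` is the set of nodes
with label `k`.  `clusterDeg G c k` is the total degree of cluster `k`. -/
def clusterDeg (G : SimpleGraph V) (c : V → ℕ) (k : ℕ) : ℕ :=
  ∑ v ∈ Finset.univ.filter (fun v => c v = k), deg G v

/-- An unordered pair is intracluster when all of its members carry the same label. -/
def sameCluster (c : V → ℕ) (p : Sym2 V) : Prop :=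
  ∀ u ∈ p, ∀ v ∈ p, c u = c v

/-- The number of intracluster edges, `∑ₖ |Eₖ|`. -/
def intraEdges (G : SimpleGraph V) (c : V → ℕ) : ℕ :=
  ((edgeFin G).filter (fun e => sameCluster c e)).card

/-- The number of extracluster edges. -/
def extraEdges (G : SimpleGraph V) (c : V → ℕ) : ℕ :=
  ((edgeFin G).filter (fun e => ¬ sameCluster c e)).card

/-- The intracluster edge fraction `Q_f = (∑ₖ |Eₖ|)/m`. -/
def Qf (G : SimpleGraph V) (c : V → ℕ) : ℝ := (intraEdges G c : ℝ) / (numEdges G : ℝ)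

/-- The null-model term `Q_0 = ∑ₖ (deg(Vₖ)/(2m))²` (summed over the nonempty clusters). -/
def Q0 (G : SimpleGraph V) (c : V → ℕ) : ℝ :=
  ∑ k ∈ Finset.univ.image c, ((clusterDeg G c k : ℝ) / (2 * (numEdges G : ℝ))) ^ 2

/-- Newman's modularity `Q_N = Q_f - Q_0`. -/
def QN (G : SimpleGraph V) (c : V → ℕ) : ℝ := Qf G c - Q0 G c

/-- The number of (nonempty) clusters of a labelling. -/
def numClusters (c : V → ℕ) : ℕ := (Finset.univ.image c).card

/-- The unordered pairs of distinct nodes. -/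
def offDiagPairs (V : Type*) [Fintype V] : Finset (Sym2 V) :=
  Finset.univ.filter (fun p => ¬ p.IsDiag)

/-- Number of node pairs in the same cluster under both clusterings. -/
def a11 (c1 c2 : V → ℕ) : ℕ :=
  ((offDiagPairs V).filter (fun p => sameCluster c1 p ∧ sameCluster c2 p)).card

/-- Number of node pairs in the same cluster under `c1` but not under `c2`. -/
def a10 (c1 c2 : V → ℕ) : ℕ :=
  ((offDiagPairs V).filter (fun p => sameCluster c1 p ∧ ¬ sameCluster c2 p)).card

/-- Number of node pairs in the same cluster under `c2` but not under `c1`. -/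
def a01 (c1 c2 : V → ℕ) : ℕ :=
  ((offDiagPairs V).filter (fun p => ¬ sameCluster c1 p ∧ sameCluster c2 p)).card

/-- The Jaccard similarity index of two clusterings. -/
def jaccard (c1 c2 : V → ℕ) : ℝ :=
  (a11 c1 c2 : ℝ) / ((a10 c1 c2 : ℝ) + (a01 c1 c2 : ℝ) + (a11 c1 c2 : ℝ))

/-- Number of (unordered) node pairs lying in the same cluster. -/
def samePairCount (c : V → ℕ) : ℕ :=
  ((offDiagPairs V).filter (fun p => sameCluster c p)).card

/-- The nodes `0,…,n-1` are split into consecutive blocks of alternating sizes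
`N₁,N₂,N₁,N₂,…`; `blockIdx N1 N2 v` is the index of the block of node `v`. -/
def blockIdx (N1 N2 v : ℕ) : ℕ :=
  2 * (v / (N1 + N2)) + (if v % (N1 + N2) < N1 then 0 else 1)

/-- The graph `G_{K,N₁,N₂}`: a disjoint union of `K` paths on `N₁` nodes and `K` paths on
`N₂` nodes, arranged as alternating consecutive blocks of `{0,…,K(N₁+N₂)-1}`. -/
def graphG (K N1 N2 : ℕ) : SimpleGraph (Fin (K * (N1 + N2))) where
  Adj u v := (u.val + 1 = v.val ∨ v.val + 1 = u.val) ∧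
             blockIdx N1 N2 u.val = blockIdx N1 N2 v.val
  symm := ⟨by rintro u v ⟨h1, h2⟩; exact ⟨h1.symm, h2.symm⟩⟩
  loopless := ⟨by rintro u ⟨h1 | h1, -⟩ <;> omega⟩

/-- The connected graph `H_{K,N₁,N₂}`: the path on all of `{0,…,K(N₁+N₂)-1}` together with,
inside each block, all chords joining nodes of the block at distance two. -/
def graphH (K N1 N2 : ℕ) : SimpleGraph (Fin (K * (N1 + N2))) where
  Adj u v := (u.val + 1 = v.val ∨ v.val + 1 = u.val) ∨
             ((u.val + 2 = v.val ∨ v.val + 2 = u.val) ∧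
              blockIdx N1 N2 u.val = blockIdx N1 N2 v.val)
  symm := by
    refine ⟨?_⟩
    rintro u v (h1 | ⟨h2, h3⟩)
    · exact Or.inl h1.symm
    · exact Or.inr ⟨h2.symm, h3.symm⟩
  loopless := ⟨by rintro u ((h | h) | ⟨h | h, -⟩) <;> omega⟩

/-- The natural clustering `𝐕_{K,N₁,N₂}`: the clusters are the `2K` blocks. -/
def naturalLabel (N1 N2 : ℕ) {n : ℕ} : Fin n → ℕ := fun v => blockIdx N1 N2 v.val

/-- The balanced clustering `𝐔_{K,N₁,N₂,J}` with `L = ⌊n/J⌋`: clusters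
`U_j = {(j-1)L+1,…,jL}` for `j = 1,…,J`, plus the remainder cluster `U_{J+1}`. -/
def uLabel (J : ℕ) {n : ℕ} : Fin n → ℕ := fun v => min (v.val / (n / J)) J

end BadComm

namespace BadComm

lemma my_deg_le_two (K N1 N2 : ℕ) (v : Fin (K*(N1+N2))) : deg (graphG K N1 N2) v ≤ 2 := by
  classical
  have h : deg (graphG K N1 N2) v ≤ ({v.val - 1, v.val + 1} : Finset ℕ).card := by
    apply Finset.card_le_card_of_injOn (fun w => w.val)
    · intro w hw
      simp only [Finset.mem_coe, Finset.mem_filter, Finset.mem_univ, true_and] at hw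
      obtain ⟨h1 | h1, -⟩ := hw <;> (simp only [Finset.mem_coe, Finset.mem_insert, Finset.mem_singleton]; omega)
    · intro a _ b _ hab; exact Fin.val_injective hab
  calc deg (graphG K N1 N2) v ≤ _ := h
    _ ≤ 2 := by
        apply le_trans (Finset.card_insert_le _ _); simp

lemma my_edge_form {K N1 N2 : ℕ} {e : Sym2 (Fin (K*(N1+N2)))}
    (he : e ∈ edgeFin (graphG K N1 N2)) :
    ∃ a b : Fin (K*(N1+N2)), e = s(a, b) ∧ a.val + 1 = b.val ∧
      blockIdx N1 N2 a.val = blockIdx N1 N2 b.val := by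
  rw [edgeFin, Finset.mem_filter] at he
  obtain ⟨-, he⟩ := he
  induction e with
  | _ a b =>
    rw [SimpleGraph.mem_edgeSet] at he
    obtain ⟨h1 | h1, h2⟩ := he
    · exact ⟨a, b, rfl, h1, h2⟩
    · exact ⟨b, a, Sym2.eq_swap, h1, h2.symm⟩

lemma countRes (P r : ℕ) (hr : r < P) : ∀ K : ℕ,
    ((Finset.range (K * P)).filter (fun v => v % P = r)).card = K := by
  intro K
  induction K with
  | zero => simp
  | succ K ih =>
    have hKP : (K+1) * P = K*P + P := by ring
    have hsplit : Finset.range ((K+1) * P) =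
        Finset.range (K * P) ∪ Finset.Ico (K * P) (K * P + P) := by
      rw [hKP]; simp only [Finset.range_eq_Ico]
      exact (Finset.Ico_union_Ico_eq_Ico (by omega) (by omega)).symm
    rw [hsplit, Finset.filter_union, Finset.card_union_of_disjoint, ih]
    · have : (Finset.Ico (K * P) (K * P + P)).filter (fun v => v % P = r) = {K * P + r} := by
        ext v
        simp only [Finset.mem_filter, Finset.mem_Ico, Finset.mem_singleton]
        constructor
        · rintro ⟨⟨h1, h2⟩, h3⟩
          obtain ⟨t, rfl⟩ := Nat.exists_eq_add_of_le h1
          have heq : (K * P + t) % P = t := by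
            rw [Nat.add_comm, Nat.add_mul_mod_self_right]
            exact Nat.mod_eq_of_lt (by omega)
          omega
        · rintro rfl
          have heq : (K * P + r) % P = r := by
            rw [Nat.add_comm, Nat.add_mul_mod_self_right]
            exact Nat.mod_eq_of_lt hr
          exact ⟨⟨by omega, by omega⟩, heq⟩
      rw [this]; simp
    · refine Finset.disjoint_filter_filter ?_
      rw [Finset.range_eq_Ico]
      exact Finset.Ico_disjoint_Ico_consecutive 0 (K*P) (K*P+P)

lemma my_numEdges_ge (K N2 : ℕ) (hK : 1 ≤ K) (hN2 : 1 ≤ N2) :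
    K * (N2 + 1) ≤ numEdges (graphG K 3 N2) := by
  classical
  set P : ℕ := 3 + N2 with hP
  have hP4 : 4 ≤ P := by omega
  set n : ℕ := K * (3 + N2) with hn'
  have hn : 0 < n := by positivity
  have hnn : n = K * P := rfl
  set c : ℕ → Fin (K * (3 + N2)) := fun v => ⟨v % n, Nat.mod_lt _ (by omega)⟩ with hc
  set T := (Finset.range (K * P)).filter (fun v => ¬ (v % P = 2 ∨ v % P = P - 1)) with hT
  have hTcard : T.card = K * (N2 + 1) := by
    have hsplit := Finset.card_filter_add_card_filter_not
      (s := Finset.range (K * P)) (p := fun v => (v % P = 2 ∨ v % P = P - 1))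
    have hdisjoint : Disjoint ((Finset.range (K*P)).filter (fun v => v % P = 2))
        ((Finset.range (K*P)).filter (fun v => v % P = P - 1)) := by
      rw [Finset.disjoint_left]
      intro v hv1 hv2
      rw [Finset.mem_filter] at hv1 hv2
      omega
    have hcard2 : ((Finset.range (K * P)).filter (fun v => v % P = 2 ∨ v % P = P - 1)).card
        = 2 * K := by
      rw [Finset.filter_or, Finset.card_union_of_disjoint hdisjoint,
        countRes P 2 (by omega) K, countRes P (P-1) (by omega) K]
      omega
    have hKP2 : K * P = K * (N2 + 1) + 2 * K := by rw [hP]; ring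
    rw [Finset.card_range, ← hT] at hsplit
    omega
  rw [numEdges, ← hTcard]
  apply Finset.card_le_card_of_injOn (fun v => s(c v, c (v + 1)))
  · intro v hv
    rw [hT, Finset.mem_coe, Finset.mem_filter, Finset.mem_range] at hv
    obtain ⟨hvlt, hvmod⟩ := hv
    push_neg at hvmod
    obtain ⟨h2, hP1⟩ := hvmod
    have hmP : v % P < P := Nat.mod_lt _ (by omega)
    have hv1 : v + 1 < n := by
      rcases Nat.lt_or_ge (v+1) n with h | h
      · exact h
      · exfalso
        obtain ⟨K', rfl⟩ : ∃ K', K = K' + 1 := ⟨K - 1, by omega⟩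
        have hexp : (K'+1) * P = K'*P + P := by ring
        have hveq2 : v = K'*P + (P-1) := by omega
        have : v % P = P - 1 := by
          rw [hveq2, Nat.add_comm, Nat.add_mul_mod_self_right]
          exact Nat.mod_eq_of_lt (by omega)
        exact hP1 this
    have hvn : v < n := by omega
    have hdm := Nat.div_add_mod v P
    have hsplit1 : v + 1 = P * (v / P) + (v % P + 1) := by omega
    have hmod1 : (v + 1) % P = v % P + 1 := by
      rw [hsplit1, Nat.mul_add_mod]
      exact Nat.mod_eq_of_lt (by omega)
    have hdiv1 : (v + 1) / P = v / P := by
      rw [hsplit1, Nat.mul_add_div (by omega : 0 < P),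
        Nat.div_eq_of_lt (show v % P + 1 < P by omega), Nat.add_zero]
    have hblock : blockIdx 3 N2 v = blockIdx 3 N2 (v + 1) := by
      rw [blockIdx, blockIdx, ← hP, hmod1, hdiv1]
      split_ifs <;> omega
    rw [edgeFin, Finset.mem_coe, Finset.mem_filter]
    refine ⟨Finset.mem_univ _, ?_⟩
    rw [SimpleGraph.mem_edgeSet]
    have hcv : (c v).val = v := Nat.mod_eq_of_lt hvn
    have hcv1 : (c (v+1)).val = v + 1 := Nat.mod_eq_of_lt hv1
    refine ⟨Or.inl (by rw [hcv, hcv1]), ?_⟩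
    rw [hcv, hcv1]
    exact hblock
  · intro a ha b hb hab
    simp only [Finset.mem_coe, hT, Finset.mem_filter, Finset.mem_range] at ha hb
    have han : a < n := ha.1
    have hbn : b < n := hb.1
    simp only [Sym2.eq, Sym2.rel_iff', Prod.mk.injEq, Prod.swap_prod_mk] at hab
    rcases hab with ⟨h1, h2⟩ | ⟨h1, h2⟩
    · have := congrArg Fin.val h1
      simp only [hc] at this
      rw [Nat.mod_eq_of_lt han, Nat.mod_eq_of_lt hbn] at this
      exact this
    · have e1 := congrArg Fin.val h1
      have e2 := congrArg Fin.val h2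
      simp only [hc] at e1 e2
      rw [Nat.mod_eq_of_lt han] at e1
      rw [Nat.mod_eq_of_lt hbn] at e2
      have hn4 : 4 ≤ n := le_trans hP4 (Nat.le_mul_of_pos_left P (by omega))
      have f1 : a = b + 1 ∨ (b + 1 = n ∧ a = 0) := by
        rcases Nat.lt_or_ge (b+1) n with h | h
        · left; rw [Nat.mod_eq_of_lt h] at e1; exact e1
        · right
          have hx : b + 1 = n := by omega
          rw [hx, Nat.mod_self] at e1
          exact ⟨hx, e1⟩
      have f2 : b = a + 1 ∨ (a + 1 = n ∧ b = 0) := by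
        rcases Nat.lt_or_ge (a+1) n with h | h
        · left; rw [Nat.mod_eq_of_lt h] at e2; exact e2.symm
        · right
          have hx : a + 1 = n := by omega
          rw [hx, Nat.mod_self] at e2
          exact ⟨hx, e2.symm⟩
      omega

lemma my_uLabel_mono {n J : ℕ} (u v : Fin n) (h : u.val ≤ v.val) :
    uLabel J u ≤ uLabel J v := by
  unfold uLabel
  exact min_le_min (Nat.div_le_div_right h) le_rfl

lemma my_uLabel_le {n J : ℕ} (v : Fin n) : uLabel J v ≤ J := min_le_right _ _

lemma my_extraEdges_le (K N1 N2 J : ℕ) :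
    extraEdges (graphG K N1 N2) (uLabel J) ≤ J := by
  classical
  set n := K * (N1 + N2)
  set lab : Fin n → ℕ := uLabel J with hlab
  rw [extraEdges, ← Finset.card_range J]
  set f : Sym2 (Fin n) → ℕ :=
    Sym2.lift ⟨fun a b => min (lab a) (lab b), fun a b => min_comm _ _⟩ with hf
  apply Finset.card_le_card_of_injOn f
  · intro e he
    rw [Finset.mem_coe, Finset.mem_filter] at he
    obtain ⟨he1, he2⟩ := he
    obtain ⟨a, b, rfl, hab, -⟩ := my_edge_form he1
    have hne : lab a ≠ lab b := by
      intro hcon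
      apply he2
      intro u hu v hv
      rw [Sym2.mem_iff] at hu hv
      rcases hu with rfl | rfl <;> rcases hv with rfl | rfl <;>
        simp_all
    have hlt : lab a < lab b :=
      lt_of_le_of_ne (my_uLabel_mono a b (by omega)) hne
    have hfe : f s(a, b) = lab a := by
      rw [hf, Sym2.lift_mk]
      simp only [min_eq_left (le_of_lt hlt)]
    rw [Finset.mem_coe, Finset.mem_range, hfe]
    exact lt_of_lt_of_le hlt (my_uLabel_le b)
  · intro e1 h1 e2 h2 hfe
    simp only [Finset.mem_coe, Finset.mem_filter] at h1 h2
    obtain ⟨a1, b1, rfl, hab1, -⟩ := my_edge_form h1.1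
    obtain ⟨a2, b2, rfl, hab2, -⟩ := my_edge_form h2.1
    have hne1 : lab a1 < lab b1 := by
      refine lt_of_le_of_ne (my_uLabel_mono a1 b1 (by omega)) ?_
      intro hcon
      apply h1.2
      intro u hu v hv
      rw [Sym2.mem_iff] at hu hv
      rcases hu with rfl | rfl <;> rcases hv with rfl | rfl <;> simp_all
    have hne2 : lab a2 < lab b2 := by
      refine lt_of_le_of_ne (my_uLabel_mono a2 b2 (by omega)) ?_
      intro hcon
      apply h2.2
      intro u hu v hv
      rw [Sym2.mem_iff] at hu hv
      rcases hu with rfl | rfl <;> rcases hv with rfl | rfl <;> simp_all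
    have hf1 : f s(a1, b1) = lab a1 := by
      rw [hf, Sym2.lift_mk]; simp only [min_eq_left (le_of_lt hne1)]
    have hf2 : f s(a2, b2) = lab a2 := by
      rw [hf, Sym2.lift_mk]; simp only [min_eq_left (le_of_lt hne2)]
    rw [hf1, hf2] at hfe
    have hvals : a1.val = a2.val := by
      by_contra hcon
      rcases Nat.lt_or_ge a1.val a2.val with h | h
      · have : lab b1 ≤ lab a2 := my_uLabel_mono b1 a2 (by omega)
        omega
      · have h' : a2.val < a1.val := by omega
        have : lab b2 ≤ lab a1 := my_uLabel_mono b2 a1 (by omega)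
        omega
    have ha : a1 = a2 := Fin.val_injective hvals
    have hb : b1 = b2 := Fin.val_injective (by omega)
    rw [ha, hb]

lemma my_fiber_card (n J : ℕ) (hJ : 0 < J) (hL : 0 < n / J) (hrem : n % J ≤ n / J) (k : ℕ) :
    (Finset.univ.filter (fun v : Fin n => uLabel J v = k)).card ≤ n / J := by
  classical
  set L := n / J with hLdef
  have h1 : ((Finset.Ico (k * L) (k * L + L)).card = L) := by
    rw [Nat.card_Ico]; omega
  rw [← h1]
  apply Finset.card_le_card_of_injOn (fun v => v.val)
  · intro v hv
    rw [Finset.mem_coe, Finset.mem_filter] at hv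
    have hv2 := hv.2
    rw [uLabel, ← hLdef] at hv2
    have hdm := Nat.div_add_mod v.val L
    have hmod : v.val % L < L := Nat.mod_lt _ (by omega)
    have hvn : v.val < n := v.isLt
    rcases Nat.lt_or_ge (v.val / L) J with h | h
    · have hk : v.val / L = k := by rw [min_eq_left (le_of_lt h)] at hv2; exact hv2
      rw [Finset.mem_coe, Finset.mem_Ico, ← hk]
      constructor
      · exact Nat.div_mul_le_self _ _
      · have hcomm : (v.val / L) * L = L * (v.val / L) := Nat.mul_comm _ _
        beta_reduce
        omega
    · have hk : k = J := by rw [min_eq_right h] at hv2; omega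
      have hJL : J * L ≤ v.val := by
        calc J * L ≤ (v.val / L) * L := Nat.mul_le_mul_right _ h
          _ ≤ v.val := Nat.div_mul_le_self _ _
      have hdmn := Nat.div_add_mod n J
      have heq : J * (n / J) = J * L := by rw [hLdef]
      rw [Finset.mem_coe, Finset.mem_Ico, hk]
      beta_reduce
      omega
  · intro a _ b _ hab
    exact Fin.val_injective hab

lemma my_sum_deg {V : Type*} [Fintype V] (G : SimpleGraph V) :
    ∑ v, deg G v = 2 * numEdges G := by
  classical
  have h1 : ∀ v, deg G v = G.degree v := by
    intro v
    rw [deg, SimpleGraph.degree]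
    congr 1
    ext w
    simp [SimpleGraph.mem_neighborFinset]
  have h2 : numEdges G = G.edgeFinset.card := by
    rw [numEdges, edgeFin]
    congr 1
    ext e
    simp [SimpleGraph.mem_edgeFinset]
  rw [h2]
  simp only [h1]
  exact SimpleGraph.sum_degrees_eq_twice_card_edges G

lemma my_intra_extra {V : Type*} [Fintype V] (G : SimpleGraph V) (c : V → ℕ) :
    intraEdges G c + extraEdges G c = numEdges G := by
  classical
  rw [intraEdges, extraEdges, numEdges]
  exact Finset.card_filter_add_card_filter_not _

lemma my_clusterDeg_sum {V : Type*} [Fintype V] (G : SimpleGraph V) (c : V → ℕ) :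
    ∑ k ∈ Finset.univ.image c, clusterDeg G c k = 2 * numEdges G := by
  classical
  rw [← my_sum_deg G]
  simp only [clusterDeg]
  exact Finset.sum_fiberwise_of_maps_to (fun v _ => Finset.mem_image_of_mem c (Finset.mem_univ v)) _

lemma my_main_bound (K x : ℕ) (hK : 1 ≤ K) (hx : 1 ≤ x) :
    QN (graphG K 3 (x ^ 2 * K)) (uLabel (x * K)) ≥
      1 - (x : ℝ) / (1 + (x : ℝ) ^ 2 * (K : ℝ))
        - 2 * (3 + (x : ℝ) ^ 2 * (K : ℝ)) ^ 2 /
            ((1 + (x : ℝ) ^ 2 * (K : ℝ)) ^ 2 * (x : ℝ) * (K : ℝ)) := by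
  classical
  set N2 : ℕ := x ^ 2 * K with hN2def
  set n : ℕ := K * (3 + N2) with hndef
  set G := graphG K 3 N2 with hG
  set J : ℕ := x * K with hJdef
  set L : ℕ := n / J with hLdef
  set c : Fin n → ℕ := uLabel J with hc
  -- natural number facts
  have hN2 : 1 ≤ N2 := by
    rw [hN2def]
    simpa using Nat.mul_le_mul (Nat.one_le_pow 2 x (by omega)) hK
  have hJpos : 0 < J := by rw [hJdef]; positivity
  have hm0 : K * (N2 + 1) ≤ numEdges G := my_numEdges_ge K N2 hK hN2
  have hmpos : 0 < numEdges G := lt_of_lt_of_le (by positivity) hm0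
  have hJL : J ≤ L := by
    rw [hLdef, Nat.le_div_iff_mul_le hJpos, hJdef, hndef, hN2def]
    nlinarith
  have hLpos : 0 < L := lt_of_lt_of_le hJpos hJL
  have hrem : n % J ≤ L := le_trans (le_of_lt (Nat.mod_lt _ hJpos)) hJL
  have hxL : x * L ≤ 3 + N2 := by
    have h1 : L * J ≤ n := Nat.div_mul_le_self n J
    have h2 : K * (x * L) = L * J := by rw [hJdef]; ring
    apply Nat.le_of_mul_le_mul_left _ (show 0 < K by omega)
    rw [h2, ← hndef]
    exact h1
  have hextra : extraEdges G c ≤ J := my_extraEdges_le K 3 N2 J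
  have hintra : intraEdges G c + extraEdges G c = numEdges G := my_intra_extra G c
  have hcdeg : ∀ k, clusterDeg G c k ≤ 2 * L := by
    intro k
    rw [clusterDeg]
    calc ∑ v ∈ Finset.univ.filter (fun v => c v = k), deg G v
        ≤ ∑ v ∈ Finset.univ.filter (fun v => c v = k), 2 :=
          Finset.sum_le_sum (fun v _ => my_deg_le_two K 3 N2 v)
      _ = (Finset.univ.filter (fun v => c v = k)).card * 2 := by
          rw [Finset.sum_const, smul_eq_mul]
      _ ≤ L * 2 := by
          apply Nat.mul_le_mul_right
          exact my_fiber_card n J hJpos hLpos hrem k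
      _ = 2 * L := by ring
  -- real versions
  set M : ℝ := (numEdges G : ℝ) with hM
  have hMpos : (0:ℝ) < M := by rw [hM]; exact_mod_cast hmpos
  have hN2R : ((N2:ℕ) : ℝ) = (x:ℝ)^2 * (K:ℝ) := by rw [hN2def]; push_cast; ring
  set a : ℝ := (x:ℝ) with ha
  set kk : ℝ := (K:ℝ) with hkk
  set A : ℝ := 1 + a^2*kk with hA
  set B : ℝ := 3 + a^2*kk with hB
  have hak : (0:ℝ) ≤ a^2*kk := by positivity
  have hApos : (0:ℝ) < A := by rw [hA]; linarith
  have hBpos : (0:ℝ) < B := by rw [hB]; linarith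
  have hAB : A ≤ 2*B := by rw [hA, hB]; linarith
  have hMm0 : kk * A ≤ M := by
    have h : ((K * (N2+1) : ℕ) : ℝ) ≤ M := by rw [hM]; exact_mod_cast hm0
    have h2 : ((K * (N2+1) : ℕ) : ℝ) = kk * ((N2:ℝ) + 1) := by push_cast; ring
    rw [h2, hN2R] at h
    calc kk * A = kk * ((x:ℝ)^2*(K:ℝ) + 1) := by rw [hA]; ring
      _ ≤ M := h
  have hQf : Qf G c ≥ 1 - (J:ℝ)/M := by
    have hi : (intraEdges G c : ℝ) = M - (extraEdges G c : ℝ) := by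
      rw [hM]; push_cast [← hintra]; ring
    have hext : (extraEdges G c : ℝ) ≤ (J:ℝ) := by exact_mod_cast hextra
    rw [Qf, ← hM, hi, ge_iff_le, sub_div, div_self (ne_of_gt hMpos)]
    gcongr
  have hQ0 : Q0 G c ≤ (L:ℝ)/M := by
    rw [Q0, ← hM]
    have hsumdeg : ∑ k ∈ Finset.univ.image c, ((clusterDeg G c k : ℕ) : ℝ) = 2 * M := by
      rw [hM, ← Nat.cast_sum, my_clusterDeg_sum G c]
      push_cast
      ring
    have hstep : ∀ k ∈ Finset.univ.image c,
        ((clusterDeg G c k : ℝ) / (2 * M)) ^ 2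
          ≤ ((L:ℝ)/M) * ((clusterDeg G c k : ℝ) / (2 * M)) := by
      intro k _
      have hd : (clusterDeg G c k : ℝ) ≤ 2 * (L:ℝ) := by exact_mod_cast hcdeg k
      have hdpos : (0:ℝ) ≤ (clusterDeg G c k : ℝ) := Nat.cast_nonneg _
      have hfrac : (clusterDeg G c k : ℝ) / (2 * M) ≤ (L:ℝ)/M := by
        rw [div_le_div_iff₀ (by positivity) hMpos]
        nlinarith
      have hfracpos : (0:ℝ) ≤ (clusterDeg G c k : ℝ) / (2 * M) := by positivity
      calc ((clusterDeg G c k : ℝ) / (2 * M)) ^ 2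
          = ((clusterDeg G c k : ℝ) / (2 * M)) * ((clusterDeg G c k : ℝ) / (2 * M)) := sq _
        _ ≤ ((L:ℝ)/M) * ((clusterDeg G c k : ℝ) / (2 * M)) :=
            mul_le_mul_of_nonneg_right hfrac hfracpos
    calc ∑ k ∈ Finset.univ.image c, ((clusterDeg G c k : ℝ) / (2 * M)) ^ 2
        ≤ ∑ k ∈ Finset.univ.image c, ((L:ℝ)/M) * ((clusterDeg G c k : ℝ) / (2 * M)) :=
          Finset.sum_le_sum hstep
      _ = ((L:ℝ)/M) * ((∑ k ∈ Finset.univ.image c, ((clusterDeg G c k : ℕ) : ℝ)) / (2 * M)) := by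
          rw [← Finset.mul_sum, Finset.sum_div]
      _ = ((L:ℝ)/M) * ((2 * M) / (2 * M)) := by rw [hsumdeg]
      _ = (L:ℝ)/M := by rw [div_self (by positivity), mul_one]
  -- final arithmetic
  have hQN : QN G c ≥ 1 - (J:ℝ)/M - (L:ℝ)/M := by
    rw [QN]
    linarith
  have hxR : (1:ℝ) ≤ a := by rw [ha]; exact_mod_cast hx
  have hKR : (1:ℝ) ≤ kk := by rw [hkk]; exact_mod_cast hK
  have hJR : (J:ℝ) = a * kk := by rw [hJdef]; push_cast; ring
  have hxLR : a * (L:ℝ) ≤ B := by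
    have h : ((x * L : ℕ) : ℝ) ≤ ((3 + N2 : ℕ) : ℝ) := by exact_mod_cast hxL
    have h2 : ((x * L : ℕ) : ℝ) = a * (L:ℝ) := by push_cast; ring
    have h3 : ((3 + N2 : ℕ) : ℝ) = B := by push_cast [hN2R]; rw [hB]
    rw [h2, h3] at h
    exact h
  have hLR : (0:ℝ) ≤ (L:ℝ) := Nat.cast_nonneg _
  have hJM : (J:ℝ)/M ≤ a / A := by
    rw [div_le_div_iff₀ hMpos hApos, hJR]
    calc a * kk * A = a * (kk * A) := by ring
      _ ≤ a * M := mul_le_mul_of_nonneg_left hMm0 (by linarith)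
  have hLM : (L:ℝ)/M ≤ 2 * B^2 / (A^2 * a * kk) := by
    rw [div_le_div_iff₀ hMpos (by positivity)]
    calc (L:ℝ) * (A^2 * a * kk) = (a * (L:ℝ)) * (A^2 * kk) := by ring
      _ ≤ B * (A^2 * kk) := mul_le_mul_of_nonneg_right hxLR (by positivity)
      _ = (A * (B * kk)) * A := by ring
      _ ≤ (A * (B * kk)) * (2*B) := mul_le_mul_of_nonneg_left hAB (by positivity)
      _ = (2 * B * B) * (kk * A) := by ring
      _ ≤ (2 * B * B) * M := mul_le_mul_of_nonneg_left hMm0 (by positivity)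
      _ = 2 * B^2 * M := by ring
  have hgoal : QN G c ≥ 1 - a / A - 2 * B^2 / (A^2 * a * kk) := by linarith
  calc QN G c ≥ 1 - a / A - 2 * B^2 / (A^2 * a * kk) := hgoal
    _ = 1 - (x : ℝ) / (1 + (x : ℝ) ^ 2 * (K : ℝ))
          - 2 * (3 + (x : ℝ) ^ 2 * (K : ℝ)) ^ 2 /
              ((1 + (x : ℝ) ^ 2 * (K : ℝ)) ^ 2 * (x : ℝ) * (K : ℝ)) := by
        rw [hA, hB, ha, hkk]

end BadComm

open BadComm Filter

/-- with `N₁ = 3`, `J = xK`, `N₂ = x²K`,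
`Q_N(𝐔_{K,3,x²K,xK}, G_{K,3,x²K}) ≥ 1 − x/(1+x²K) − 2(3+x²K)²/((1+x²K)²xK)`,
and the modularity tends to `1` as `x → ∞`. -/
theorem statement12 (K : ℕ) (hK : 1 ≤ K) :
    (∀ x : ℕ, 1 ≤ x →
      QN (graphG K 3 (x ^ 2 * K)) (uLabel (x * K)) ≥
        1 - (x : ℝ) / (1 + (x : ℝ) ^ 2 * (K : ℝ))
          - 2 * (3 + (x : ℝ) ^ 2 * (K : ℝ)) ^ 2 /
              ((1 + (x : ℝ) ^ 2 * (K : ℝ)) ^ 2 * (x : ℝ) * (K : ℝ))) ∧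
    Tendsto (fun x : ℕ => QN (graphG K 3 (x ^ 2 * K)) (uLabel (x * K)))
      atTop (nhds 1) := by
  classical
  refine ⟨fun x hx => my_main_bound K x hK hx, ?_⟩
  have hup : ∀ x : ℕ, 1 ≤ x → QN (graphG K 3 (x^2*K)) (uLabel (x*K)) ≤ 1 := by
    intro x hx
    rw [QN, Qf]
    have hQ0 : (0:ℝ) ≤ Q0 (graphG K 3 (x^2*K)) (uLabel (x*K)) :=
      Finset.sum_nonneg (fun k _ => sq_nonneg _)
    have hle : (intraEdges (graphG K 3 (x^2*K)) (uLabel (x*K)) : ℝ)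
        ≤ (numEdges (graphG K 3 (x^2*K)) : ℝ) := by
      exact_mod_cast Nat.le.intro (my_intra_extra _ _)
    have hd := div_le_one_of_le₀ hle (Nat.cast_nonneg _)
    linarith
  have hlow : ∀ x : ℕ, 1 ≤ x →
      1 - 33/(x:ℝ) ≤ QN (graphG K 3 (x^2*K)) (uLabel (x*K)) := by
    intro x hx
    have hb := my_main_bound K x hK hx
    have hxR : (1:ℝ) ≤ (x:ℝ) := by exact_mod_cast hx
    have hKR : (1:ℝ) ≤ (K:ℝ) := by exact_mod_cast hK
    have hxpos : (0:ℝ) < (x:ℝ) := by linarith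
    set t : ℝ := (x:ℝ)^2 * (K:ℝ) with htdef
    have ht : (1:ℝ) ≤ t := by
      rw [htdef]
      nlinarith
    have h1 : (x:ℝ)/(1+t) ≤ 1/(x:ℝ) := by
      rw [div_le_div_iff₀ (by linarith) hxpos]
      rw [htdef]
      nlinarith
    have h2 : 2*(3+t)^2/((1+t)^2*(x:ℝ)*(K:ℝ)) ≤ 32/(x:ℝ) := by
      rw [div_le_div_iff₀ (by positivity) hxpos]
      have h3t : 3+t ≤ 4*t := by linarith
      have e1 : (3+t)^2 ≤ 16*t^2 := by nlinarith
      have e2 : t^2 ≤ (1+t)^2 := by nlinarith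
      have e3 : t^2*(x:ℝ) ≤ (1+t)^2*(x:ℝ) := mul_le_mul_of_nonneg_right e2 hxpos.le
      have e4 : (1+t)^2*(x:ℝ) ≤ (1+t)^2*(x:ℝ)*(K:ℝ) :=
        le_mul_of_one_le_right (by positivity) hKR
      nlinarith [mul_nonneg (sub_nonneg.mpr e1) hxpos.le]
    have hsum : 1/(x:ℝ) + 32/(x:ℝ) = 33/(x:ℝ) := by ring
    linarith
  have hmain : Tendsto (fun x : ℕ => 1 - 33/(x:ℝ)) atTop (nhds 1) := by
    have h0 : Tendsto (fun x : ℕ => 33/(x:ℝ)) atTop (nhds 0) :=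
      Tendsto.div_atTop tendsto_const_nhds tendsto_natCast_atTop_atTop
    simpa using tendsto_const_nhds.sub h0
  apply tendsto_of_tendsto_of_tendsto_of_le_of_le' hmain tendsto_const_nhds
  · filter_upwards [eventually_ge_atTop 1] with x hx using hlow x hx
  · filter_upwards [eventually_ge_atTop 1] with x hx using hup x hx
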